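/- Let x₁,…,x₅ ∈ SL(2,ℂ), x̌ᵢ = xᵢ - (tr(xᵢ)/2)•1, and s_{i₁⋯i_r} = -tr(x̌_{i₁}⋯x̌_{i_r}). Then for indices a₁ < a₂ < a₃ < a₄ and any c, s_{a₁c}·s_{a₂a₃a₄} - s_{a₂c}·s_{a₁a₃a₄} + s_{a₃c}·s_{a₁a₂a₄} - s_{a₄c}·s_{a₁a₂a₃} = 0. (Type II relation.) -/
import Mathlib


open Matrix

lemma key_stmt9 (A B C D E : Matrix (Fin 2) (Fin 2) ℂ)
    (hA : A 1 1 = - A 0 0) (hB : B 1 1 = - B 0 0) (hC : C 1 1 = - C 0 0)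
    (hD : D 1 1 = - D 0 0) :
    (-(trace (A * E))) * (-(trace (B * C * D)))
      - (-(trace (B * E))) * (-(trace (A * C * D)))
      + (-(trace (C * E))) * (-(trace (A * B * D)))
      - (-(trace (D * E))) * (-(trace (A * B * C))) = 0 := by
  simp only [Matrix.trace_fin_two, Matrix.mul_apply, Fin.sum_univ_two, hA, hB, hC, hD]
  ring

theorem stmt_9 (x : Fin 5 → Matrix (Fin 2) (Fin 2) ℂ)
    (hx : ∀ i, (x i).det = 1)
    (c : Fin 5 → Matrix (Fin 2) (Fin 2) ℂ)
    (hc : ∀ i, c i = x i - ((trace (x i)) / 2) • (1 : Matrix (Fin 2) (Fin 2) ℂ))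
    (a₁ a₂ a₃ a₄ d : Fin 5)
    (ha₁ : a₁ < a₂) (ha₂ : a₂ < a₃) (ha₃ : a₃ < a₄) :
    (-(trace (c a₁ * c d))) * (-(trace (c a₂ * c a₃ * c a₄)))
      - (-(trace (c a₂ * c d))) * (-(trace (c a₁ * c a₃ * c a₄)))
      + (-(trace (c a₃ * c d))) * (-(trace (c a₁ * c a₂ * c a₄)))
      - (-(trace (c a₄ * c d))) * (-(trace (c a₁ * c a₂ * c a₃))) = 0 := by
  have h : ∀ i, c i 1 1 = - (c i 0 0) := by
    intro i
    simp [hc, Matrix.trace_fin_two, Matrix.one_apply]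
    ring
  exact key_stmt9 _ _ _ _ _ (h a₁) (h a₂) (h a₃) (h a₄)
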